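/- Let x ∈ U^+_γ ∩ T_i(U^+) and define x_0 = x and x_{k+1} = (1/[k+1]_{q_i})(e_i x_k − q_i^{⟨γ,h_i⟩+2k} x_k e_i). Then for all n ≥ 0, e_i^{(n)} x = Σ_{k=0}^{n} q_i^{(n−k)(⟨γ,h_i⟩+k)} x_k e_i^{(n−k)}, where e_i^{(m)} = e_i^m/[m]!_{q_i}. -/

import Mathlib

noncomputable section

/-- The quantum integer `[n]_w = (wⁿ − w⁻ⁿ)/(w − w⁻¹)` in `ℚ(q)`. -/
def qInt (w : RatFunc ℚ) (n : ℕ) : RatFunc ℚ := (w ^ n - w⁻¹ ^ n) / (w - w⁻¹)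

/-- The quantum factorial `[n]!_w`. -/
def qFac (w : RatFunc ℚ) : ℕ → RatFunc ℚ
  | 0 => 1
  | n + 1 => qFac w n * qInt w (n + 1)

lemma Xpow_ne_one (m : ℕ) (hm : 0 < m) : (RatFunc.X : RatFunc ℚ) ^ m ≠ 1 := by
  intro h
  have h2 : ((Polynomial.X : Polynomial ℚ) ^ m : Polynomial ℚ) = 1 := by
    apply RatFunc.algebraMap_injective ℚ ?_
    · simpa [RatFunc.algebraMap_X] using h
  have := Polynomial.natDegree_X_pow (R := ℚ) m
  rw [h2] at this
  simp at this
  omega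

section
variable {d : ℕ} (hd : 0 < d) {qi : RatFunc ℚ} (hqi : qi = (RatFunc.X : RatFunc ℚ) ^ d)
include hd hqi

omit hd in
lemma qi_ne_zero : qi ≠ 0 := by
  subst hqi; exact pow_ne_zero _ RatFunc.X_ne_zero

lemma qi_pow_ne_one {m : ℕ} (hm : 0 < m) : qi ^ m ≠ 1 := by
  subst hqi; rw [← pow_mul]; exact Xpow_ne_one _ (by positivity)

lemma num_ne_zero {m : ℕ} (hm : 0 < m) : qi ^ m - qi⁻¹ ^ m ≠ 0 := by
  rw [sub_ne_zero]
  intro h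
  have h0 := qi_ne_zero hqi
  have : qi ^ (2 * m) = 1 := by
    rw [two_mul, pow_add]; nth_rewrite 1 [h]; rw [← mul_pow, inv_mul_cancel₀ h0, one_pow]
  exact qi_pow_ne_one hd hqi (by omega) this

lemma den_ne_zero : qi - qi⁻¹ ≠ 0 := by
  simpa using num_ne_zero hd hqi (m := 1) one_pos

lemma qInt_ne_zero (m : ℕ) : qInt qi (m + 1) ≠ 0 :=
  div_ne_zero (num_ne_zero hd hqi (Nat.succ_pos m)) (den_ne_zero hd hqi)

lemma qFac_ne_zero (m : ℕ) : qFac qi m ≠ 0 := by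
  induction m with
  | zero => simp [qFac]
  | succ n ih => exact mul_ne_zero ih (qInt_ne_zero hd hqi n)

lemma key_qInt (c : ℤ) (n j : ℕ) (hj : j ≤ n + 1) :
    qi ^ (((n:ℤ)+1-j)*(c+j-1)) * qInt qi j
      + qi ^ ((((n:ℤ)-j)*(c+j)) + c + 2*j) * qInt qi (n+1-j)
    = qInt qi (n+1) * qi ^ (((n:ℤ)+1-j)*(c+j)) := by
  have h0 := qi_ne_zero hqi
  have hden := den_ne_zero hd hqi
  have hc : ((n+1-j : ℕ) : ℤ) = (n:ℤ)+1-j := by omega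
  unfold qInt
  rw [show qi ^ (n+1-j) = qi ^ ((n:ℤ)+1-j) by rw [← hc, zpow_natCast],
      show qi⁻¹ ^ (n+1-j) = qi⁻¹ ^ ((n:ℤ)+1-j) by rw [← hc, zpow_natCast],
      show qi ^ j = qi ^ (j:ℤ) by rw [zpow_natCast],
      show qi⁻¹ ^ j = qi⁻¹ ^ (j:ℤ) by rw [zpow_natCast],
      show qi ^ (n+1) = qi ^ ((n:ℤ)+1) by rw [← zpow_natCast]; norm_cast,
      show qi⁻¹ ^ (n+1) = qi⁻¹ ^ ((n:ℤ)+1) by rw [← zpow_natCast]; norm_cast]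
  simp only [inv_zpow, ← zpow_neg]
  rw [mul_div_assoc', mul_div_assoc', div_mul_eq_mul_div, ← add_div]
  congr 1
  simp only [mul_sub, sub_mul, ← zpow_add₀ h0]
  ring_nf

end

theorem stmt_10' {U : Type*} [Ring U] [Algebra (RatFunc ℚ) U]
    (qi : RatFunc ℚ) (h0 : qi ≠ 0)
    (hqInt : ∀ m : ℕ, qInt qi (m+1) ≠ 0)
    (hqFac : ∀ m : ℕ, qFac qi m ≠ 0)
    (key : ∀ (c : ℤ) (n j : ℕ), j ≤ n + 1 →
      qi ^ (((n:ℤ)+1-j)*(c+j-1)) * qInt qi j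
        + qi ^ ((((n:ℤ)-j)*(c+j)) + c + 2*j) * qInt qi (n+1-j)
      = qInt qi (n+1) * qi ^ (((n:ℤ)+1-j)*(c+j)))
    (c : ℤ)
    (e x : U)
    (xs : ℕ → U) (hx0 : xs 0 = x)
    (hrec : ∀ k : ℕ,
      xs (k + 1) = (qInt qi (k + 1))⁻¹ •
        (e * xs k - (qi ^ (c + 2 * (k : ℤ))) • (xs k * e))) :
    ∀ n : ℕ,
      (qFac qi n)⁻¹ • (e ^ n) * x =
        ∑ k ∈ Finset.range (n + 1),
          (qi ^ (((n : ℤ) - k) * (c + k))) •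
            (xs k * ((qFac qi (n - k))⁻¹ • (e ^ (n - k)))) := by
  have hrec' : ∀ k : ℕ, e * xs k
      = qInt qi (k+1) • xs (k+1) + (qi ^ (c + 2*(k:ℤ))) • (xs k * e) := by
    intro k
    rw [hrec k, smul_inv_smul₀ (hqInt k), sub_add_cancel]
  intro n
  induction n with
  | zero =>
    simp [qFac, hx0, smul_mul_assoc]
  | succ n ih =>
    set u : ℕ → U := fun j => xs j * ((qFac qi (n+1-j))⁻¹ • (e ^ (n+1-j))) with hu
    set a : ℕ → RatFunc ℚ := fun j => qi ^ (((n:ℤ)+1-j)*(c+(j:ℤ)-1)) * qInt qi j with ha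
    set b : ℕ → RatFunc ℚ :=
      fun j => qi ^ ((((n:ℤ)-j)*(c+j)) + c + 2*(j:ℤ)) * qInt qi (n+1-j) with hb
    have h1 : (qFac qi (n+1))⁻¹ • (e ^ (n+1)) * x
        = (qInt qi (n+1))⁻¹ • (e * ((qFac qi n)⁻¹ • (e ^ n) * x)) := by
      show (qFac qi n * qInt qi (n+1))⁻¹ • (e ^ (n+1)) * x = _
      rw [mul_inv, mul_comm, mul_smul, smul_mul_assoc, smul_mul_assoc, smul_mul_assoc,
          pow_succ', mul_assoc, mul_smul_comm]
    rw [h1, ih, inv_smul_eq_iff₀ (hqInt n), Finset.mul_sum, Finset.smul_sum]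
    have hterm : ∀ k ∈ Finset.range (n+1),
        e * ((qi ^ (((n:ℤ)-k)*(c+k))) • (xs k * ((qFac qi (n-k))⁻¹ • (e ^ (n-k)))))
        = a (k+1) • u (k+1) + b k • u k := by
      intro k hk
      have hkn : k ≤ n := by simpa [Nat.lt_succ_iff] using hk
      have hn1 : n + 1 - k = (n - k) + 1 := by omega
      have hn2 : n + 1 - (k+1) = n - k := by omega
      have hfac : (qFac qi (n-k))⁻¹ = qInt qi ((n-k)+1) * (qFac qi (n+1-k))⁻¹ := by
        rw [hn1]
        show _ = qInt qi ((n-k)+1) * (qFac qi (n-k) * qInt qi ((n-k)+1))⁻¹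
        rw [mul_inv, ← mul_assoc, mul_comm (qInt qi ((n-k)+1)),
            mul_assoc, mul_inv_cancel₀ (hqInt (n-k)), mul_one]
      rw [mul_smul_comm, ← mul_assoc, hrec' k, add_mul, smul_mul_assoc, smul_mul_assoc,
          smul_add, smul_smul, smul_smul]
      congr 1
      · -- first piece
        have hexp : ((n:ℤ)+1-((k:ℤ)+1))*(c+((k:ℤ)+1)-1) = ((n:ℤ)-k)*(c+k) := by ring
        simp only [ha, hu, hn2]
        push_cast
        rw [hexp]
      · -- second piece
        simp only [hu, hb, hfac, hn1]
        simp only [mul_smul_comm, smul_smul, mul_assoc, ← pow_succ', ← zpow_add₀ h0]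
        congr 1
        ring
    rw [Finset.sum_congr rfl hterm, Finset.sum_add_distrib]
    have hA : ∑ k ∈ Finset.range (n+1), a (k+1) • u (k+1)
        = ∑ j ∈ Finset.range (n+2), a j • u j := by
      rw [Finset.sum_range_succ' (fun j => a j • u j) (n+1)]
      have : a 0 = 0 := by simp [ha, qInt]
      simp [this]
    have hB : ∑ k ∈ Finset.range (n+1), b k • u k
        = ∑ j ∈ Finset.range (n+2), b j • u j := by
      rw [Finset.sum_range_succ (fun j => b j • u j) (n+1)]
      have : b (n+1) = 0 := by simp [hb, qInt]
      simp [this]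
    rw [hA, hB, ← Finset.sum_add_distrib]
    apply Finset.sum_congr rfl
    intro j hj
    have hjn : j ≤ n + 1 := by simpa [Nat.lt_succ_iff] using hj
    rw [smul_smul, ← add_smul]
    rw [show ((((n+1 : ℕ) : ℤ)) - (j:ℤ)) * (c+j) = ((n:ℤ)+1-j)*(c+(j:ℤ)) by push_cast; ring]
    rw [ha, hb, key c n j hjn, hu]

/-- for `x ∈ U⁺_γ ∩ T_i(U⁺)`, with `x_0 = x` and
`x_{k+1} = [k+1]_{q_i}⁻¹ (e_i x_k − q_i^{⟨γ,h_i⟩+2k} x_k e_i)`, one has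
`e_i^{(n)} x = Σ_{k=0}^n q_i^{(n−k)(⟨γ,h_i⟩+k)} x_k e_i^{(n−k)}`,
where `e_i^{(m)} = e_i^m/[m]!_{q_i}` and `q_i = q^{(α_i,α_i)/2}`. -/
theorem stmt_10 {U : Type*} [Ring U] [Algebra (RatFunc ℚ) U]
    (d : ℕ) (hd : 0 < d)            -- d = (α_i,α_i)/2
    (qi : RatFunc ℚ) (hqi : qi = (RatFunc.X : RatFunc ℚ) ^ d)
    (c : ℤ)                          -- c = ⟨γ,h_i⟩
    (Uplus TiUplus : Set U)          -- U⁺ and T_i(U⁺)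
    (e x : U) (hx : x ∈ Uplus ∩ TiUplus)
    (xs : ℕ → U) (hx0 : xs 0 = x)
    (hrec : ∀ k : ℕ,
      xs (k + 1) = (qInt qi (k + 1))⁻¹ •
        (e * xs k - (qi ^ (c + 2 * (k : ℤ))) • (xs k * e))) :
    ∀ n : ℕ,
      (qFac qi n)⁻¹ • (e ^ n) * x =
        ∑ k ∈ Finset.range (n + 1),
          (qi ^ (((n : ℤ) - k) * (c + k))) •
            (xs k * ((qFac qi (n - k))⁻¹ • (e ^ (n - k)))) := by
  exact stmt_10' qi (qi_ne_zero hqi) (qInt_ne_zero hd hqi) (qFac_ne_zero hd hqi)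
    (key_qInt hd hqi) c e x xs hx0 hrec
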